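/- For every initial condition x₀ ≥ 0, the sequence defined by x_{n+1} = Q(x_n) satisfies the ultimate bounds liminf_{n→∞} x_n ≥ F₁/(exp(−a·Φ₂) − 1) and limsup_{n→∞} (x_n + F(x_n)) ≤ F₂/(1 − exp(a·Φ₁)); that is, the pre-impulse states are ultimately bounded below by F₁/(exp(−a·Φ₂) − 1) and the post-impulse states ultimately bounded above by F₂/(1 − exp(a·Φ₁)). -/

import Mathlib

open Real Set Filter

/-- Ultimate bounds on the orbits of the return map: the pre-impulse states are ultimately
bounded below by F₁/(exp(−aΦ₂) − 1) and the post-impulse states ultimately bounded above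
by F₂/(1 − exp(aΦ₁)). -/
theorem stmt19
    (a : ℝ) (ha : a < 0) (Φ F : ℝ → ℝ)
    (hΦc : ContinuousOn Φ (Set.Ici 0)) (hFc : ContinuousOn F (Set.Ici 0))
    (Φ₁ Φ₂ F₁ F₂ : ℝ) (hΦ₁ : 0 < Φ₁) (hF₁ : 0 < F₁)
    (hΦb : ∀ x : ℝ, 0 ≤ x → Φ₁ ≤ Φ x ∧ Φ x ≤ Φ₂)
    (hFb : ∀ x : ℝ, 0 ≤ x → F₁ ≤ F x ∧ F x ≤ F₂)
    (Q : ℝ → ℝ) (hQ : ∀ x : ℝ, Q x = Real.exp (a * Φ x) * (x + F x)) :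
    ∀ x : ℕ → ℝ, 0 ≤ x 0 → (∀ n : ℕ, x (n + 1) = Q (x n)) →
      F₁ / (Real.exp (-a * Φ₂) - 1) ≤ Filter.liminf x Filter.atTop ∧
      Filter.limsup (fun n : ℕ => x n + F (x n)) Filter.atTop ≤
        F₂ / (1 - Real.exp (a * Φ₁)) := by
  intro x hx0 hrec
  have hΦ₂ : 0 < Φ₂ := lt_of_lt_of_le hΦ₁ (le_trans (hΦb (x 0) hx0).1 (hΦb (x 0) hx0).2)
  set β := Real.exp (a * Φ₂) with hβdef
  set α := Real.exp (a * Φ₁) with hαdef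
  have hβpos : 0 < β := Real.exp_pos _
  have hαpos : 0 < α := Real.exp_pos _
  have hβ1 : β < 1 := Real.exp_lt_one_iff.mpr (by nlinarith)
  have hα1 : α < 1 := Real.exp_lt_one_iff.mpr (by nlinarith)
  have hx : ∀ n, 0 ≤ x n := by
    intro n
    induction n with
    | zero => exact hx0
    | succ n ih =>
      rw [hrec n, hQ]
      have h1 := (hFb _ ih).1
      have := Real.exp_pos (a * Φ (x n))
      nlinarith
  -- post-impulse sequence
  set y := fun n : ℕ => x n + F (x n) with hydef
  have hy0 : ∀ n, 0 ≤ y n := by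
    intro n
    have := (hFb _ (hx n)).1
    show (0 : ℝ) ≤ x n + F (x n)
    nlinarith [hx n]
  have hyrec : ∀ n, y (n + 1) ≤ α * y n + F₂ := by
    intro n
    have hxs : x (n + 1) ≤ α * y n := by
      rw [hrec n, hQ]
      have h1 : Real.exp (a * Φ (x n)) ≤ α :=
        Real.exp_le_exp.mpr (by nlinarith [(hΦb _ (hx n)).1])
      exact mul_le_mul_of_nonneg_right h1 (hy0 n)
    have h2 := (hFb _ (hx (n + 1))).2
    show x (n + 1) + F (x (n + 1)) ≤ α * y n + F₂
    linarith
  set U := F₂ / (1 - α) with hUdef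
  have h1α : (1 : ℝ) - α ≠ 0 := by linarith
  have hUfix : α * U + F₂ = U := by rw [hUdef, mul_div_assoc', div_add' _ _ _ h1α]; congr 1; ring
  have hindU : ∀ n, y n - U ≤ α ^ n * (y 0 - U) := by
    intro n
    induction n with
    | zero => simp
    | succ n ih =>
      have h1 := hyrec n
      have h2 : α * (y n - U) ≤ α * (α ^ n * (y 0 - U)) :=
        mul_le_mul_of_nonneg_left ih hαpos.le
      have h3 : α ^ (n + 1) * (y 0 - U) = α * (α ^ n * (y 0 - U)) := by ring
      nlinarith
  have hub : ∀ n, y n ≤ U + α ^ n * (y 0 - U) := fun n => by linarith [hindU n]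
  have htendU : Tendsto (fun n : ℕ => U + α ^ n * (y 0 - U)) atTop (nhds U) := by
    have h0 := tendsto_pow_atTop_nhds_zero_of_lt_one hαpos.le hα1
    have h1 : Tendsto (fun n : ℕ => U + α ^ n * (y 0 - U)) atTop (nhds (U + 0 * (y 0 - U))) :=
      tendsto_const_nhds.add (h0.mul_const (y 0 - U))
    simpa using h1
  have hlimsup : Filter.limsup y Filter.atTop ≤ U := by
    have hcb : Filter.IsCoboundedUnder (· ≤ ·) Filter.atTop y :=
      Filter.isCoboundedUnder_le_of_le Filter.atTop hy0
    have := Filter.limsup_le_limsup (Filter.Eventually.of_forall hub)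
      hcb htendU.isBoundedUnder_le
    rwa [htendU.limsup_eq] at this
  -- crude upper bound on x, for coboundedness
  have hxub : ∀ n, x n ≤ U + |y 0 - U| := by
    intro n
    have hxy : x n ≤ y n := by
      show x n ≤ x n + F (x n)
      linarith [(hFb _ (hx n)).1]
    have h1 : α ^ n * (y 0 - U) ≤ α ^ n * |y 0 - U| :=
      mul_le_mul_of_nonneg_left (le_abs_self _) (pow_nonneg hαpos.le n)
    have h2 : α ^ n * |y 0 - U| ≤ 1 * |y 0 - U| :=
      mul_le_mul_of_nonneg_right (pow_le_one₀ hαpos.le hα1.le) (abs_nonneg _)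
    linarith [hub n]
  -- pre-impulse lower bound
  have hlow : ∀ n, β * (x n + F₁) ≤ x (n + 1) := by
    intro n
    rw [hrec n, hQ]
    have h1 : β ≤ Real.exp (a * Φ (x n)) :=
      Real.exp_le_exp.mpr (by nlinarith [(hΦb _ (hx n)).2])
    have h2 : x n + F₁ ≤ x n + F (x n) := by linarith [(hFb _ (hx n)).1]
    exact mul_le_mul h1 h2 (by linarith [hx n]) (Real.exp_pos _).le
  set L := β * F₁ / (1 - β) with hLdef
  have h1β : (1 : ℝ) - β ≠ 0 := by linarith
  have hLfix : β * L + β * F₁ = L := by rw [hLdef, mul_div_assoc', div_add' _ _ _ h1β]; congr 1; ring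
  have hind : ∀ n, β ^ n * (x 0 - L) ≤ x n - L := by
    intro n
    induction n with
    | zero => simp
    | succ n ih =>
      have h1 := hlow n
      have h2 : β * (β ^ n * (x 0 - L)) ≤ β * (x n - L) :=
        mul_le_mul_of_nonneg_left ih hβpos.le
      have h3 : β ^ (n + 1) * (x 0 - L) = β * (β ^ n * (x 0 - L)) := by ring
      nlinarith
  have hlb : ∀ n, L - β ^ n * L ≤ x n := by
    intro n
    have h1 := hind n
    have h2 : 0 ≤ β ^ n * x 0 := mul_nonneg (pow_nonneg hβpos.le n) hx0
    nlinarith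
  have htend : Tendsto (fun n : ℕ => L - β ^ n * L) atTop (nhds L) := by
    have h0 := tendsto_pow_atTop_nhds_zero_of_lt_one hβpos.le hβ1
    have h1 : Tendsto (fun n : ℕ => L - β ^ n * L) atTop (nhds (L - 0 * L)) :=
      tendsto_const_nhds.sub (h0.mul_const L)
    simpa using h1
  have hliminf : L ≤ Filter.liminf x Filter.atTop := by
    have hcb : Filter.IsCoboundedUnder (· ≥ ·) Filter.atTop x :=
      Filter.isCoboundedUnder_ge_of_le Filter.atTop hxub
    have := Filter.liminf_le_liminf (Filter.Eventually.of_forall hlb)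
      htend.isBoundedUnder_ge hcb
    rwa [htend.liminf_eq] at this
  constructor
  · have heq : F₁ / (Real.exp (-a * Φ₂) - 1) = L := by
      rw [show -a * Φ₂ = -(a * Φ₂) by ring, Real.exp_neg, ← hβdef, hLdef]
      rw [show β⁻¹ - 1 = (1 - β) / β by field_simp, div_div_eq_mul_div]
      ring
    rw [heq]; exact hliminf
  · exact hlimsup
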